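/- In a real normed space with linearly independent vectors x, y, the function h₊(t) := ‖x/‖x‖ + (y+t·x)/‖y+t·x‖‖ is monotone increasing on ℝ, and h₋(t) := ‖x/‖x‖ − (y+t·x)/‖y+t·x‖‖ is monotone decreasing on ℝ. -/

import Mathlib

lemma aux_mono (g : ℝ → ℝ) (c : ℝ) (hc : 0 < c)
    (hpos : ∀ t, 0 < g t)
    (hconv : ∀ u v α β : ℝ, 0 ≤ α → 0 ≤ β → α + β = 1 →
      g (α * u + β * v) ≤ α * g u + β * g v)
    (hlip : ∀ s t : ℝ, |g t - g s| ≤ c * |t - s|) :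
    Monotone (fun t => g (t + g t / c) / g t) := by
  intro s t hst
  simp only
  have hl := abs_le.1 (hlip s t)
  rw [abs_of_nonneg (sub_nonneg.2 hst)] at hl
  set a := g s with ha
  set b := g t with hb
  set Δ := t - s with hΔ
  have hΔ0 : 0 ≤ Δ := sub_nonneg.2 hst
  have hap : 0 < a := hpos s
  have hbp : 0 < b := hpos t
  have hlip1 : a - b ≤ c * Δ := by linarith [hl.1]
  set D := c * Δ + b with hD
  have hDpos : 0 < D := by positivity
  have haD : a ≤ D := by linarith
  have h1 : g (s + a / c) ≤ ((D - a) / D) * a + (a / D) * g (t + b / c) := by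
    have harg : (D - a) / D * s + a / D * (t + b / c) = s + a / c := by
      rw [hD]; field_simp; ring
    have := hconv s (t + b / c) ((D - a) / D) (a / D)
      (div_nonneg (by linarith) hDpos.le) (by positivity)
      (by field_simp; ring)
    rwa [harg] at this
  have h2 : b ≤ (b / D) * a + (c * Δ / D) * g (t + b / c) := by
    have harg : b / D * s + c * Δ / D * (t + b / c) = t := by
      rw [hD]; field_simp; ring
    have := hconv s (t + b / c) (b / D) (c * Δ / D)
      (by positivity) (by positivity)
      (by rw [← add_div, hD]; field_simp; ring)
    rwa [harg] at this
  rw [div_le_div_iff₀ hap hbp]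
  set G := g (t + b / c) with hG
  set F := g (s + a / c) with hF
  have hGp : 0 < G := hpos _
  have h1' : F * D ≤ (D - a) * a + a * G := by
    rw [div_mul_eq_mul_div, div_mul_eq_mul_div, ← add_div, le_div_iff₀ hDpos] at h1
    linarith
  have h2' : b * D ≤ b * a + c * Δ * G := by
    rw [div_mul_eq_mul_div, div_mul_eq_mul_div, ← add_div, le_div_iff₀ hDpos] at h2
    linarith
  rw [hD] at h1' h2' hDpos
  have final : F * b * (c * Δ + b) ≤ G * a * (c * Δ + b) := by
    nlinarith [mul_le_mul_of_nonneg_right h1' hbp.le,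
      mul_le_mul_of_nonneg_right h2' hap.le]
  exact le_of_mul_le_mul_right final hDpos

lemma aux_anti (g : ℝ → ℝ) (c : ℝ) (hc : 0 < c)
    (hpos : ∀ t, 0 < g t)
    (hconv : ∀ u v α β : ℝ, 0 ≤ α → 0 ≤ β → α + β = 1 →
      g (α * u + β * v) ≤ α * g u + β * g v)
    (hlip : ∀ s t : ℝ, |g t - g s| ≤ c * |t - s|) :
    Antitone (fun t => g (t - g t / c) / g t) := by
  intro s t hst
  simp only
  have hl := abs_le.1 (hlip s t)
  rw [abs_of_nonneg (sub_nonneg.2 hst)] at hl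
  set a := g s with ha
  set b := g t with hb
  set Δ := t - s with hΔ
  have hΔ0 : 0 ≤ Δ := sub_nonneg.2 hst
  have hap : 0 < a := hpos s
  have hbp : 0 < b := hpos t
  have hlip1 : b - a ≤ c * Δ := by linarith [hl.2]
  set D := c * Δ + a with hD
  have hDpos : 0 < D := by positivity
  have hbD : b ≤ D := by linarith
  have h1 : g (t - b / c) ≤ (b / D) * g (s - a / c) + ((D - b) / D) * b := by
    have harg : b / D * (s - a / c) + (D - b) / D * t = t - b / c := by
      rw [hD]; field_simp; ring
    have := hconv (s - a / c) t (b / D) ((D - b) / D)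
      (by positivity) (div_nonneg (by linarith) hDpos.le)
      (by field_simp; ring)
    rwa [harg] at this
  have h2 : a ≤ (c * Δ / D) * g (s - a / c) + (a / D) * b := by
    have harg : c * Δ / D * (s - a / c) + a / D * t = s := by
      rw [hD]; field_simp; ring
    have := hconv (s - a / c) t (c * Δ / D) (a / D)
      (by positivity) (by positivity)
      (by rw [← add_div, hD]; field_simp)
    rwa [harg] at this
  rw [div_le_div_iff₀ hbp hap]
  set H := g (s - a / c) with hH
  set K := g (t - b / c) with hK
  have hHp : 0 < H := hpos _
  have h1' : K * D ≤ b * H + (D - b) * b := by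
    rw [div_mul_eq_mul_div, div_mul_eq_mul_div, ← add_div, le_div_iff₀ hDpos] at h1
    linarith
  have h2' : a * D ≤ c * Δ * H + a * b := by
    rw [div_mul_eq_mul_div, div_mul_eq_mul_div, ← add_div, le_div_iff₀ hDpos] at h2
    linarith
  rw [hD] at h1' h2' hDpos
  have final : K * a * (c * Δ + a) ≤ H * b * (c * Δ + a) := by
    nlinarith [mul_le_mul_of_nonneg_right h1' hap.le,
      mul_le_mul_of_nonneg_right h2' hbp.le]
  exact le_of_mul_le_mul_right final hDpos

theorem stmt_11 {X : Type*} [NormedAddCommGroup X] [NormedSpace ℝ X]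
    (x y : X) (h : LinearIndependent ℝ ![x, y]) :
    Monotone (fun t : ℝ => ‖(‖x‖)⁻¹ • x + (‖y + t • x‖)⁻¹ • (y + t • x)‖) ∧
    Antitone (fun t : ℝ => ‖(‖x‖)⁻¹ • x - (‖y + t • x‖)⁻¹ • (y + t • x)‖) := by
  rw [LinearIndependent.pair_iff] at h
  have hx : x ≠ 0 := by
    intro h0
    simpa using (h 1 0 (by simp [h0])).1
  have hne : ∀ t : ℝ, y + t • x ≠ 0 := by
    intro t h0
    have := (h t 1 (by rw [one_smul, add_comm]; exact h0)).2
    norm_num at this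
  set c := ‖x‖ with hcdef
  have hc : 0 < c := norm_pos_iff.2 hx
  set g : ℝ → ℝ := fun t => ‖y + t • x‖ with hgdef
  have hpos : ∀ t, 0 < g t := fun t => norm_pos_iff.2 (hne t)
  have hconv : ∀ u v α β : ℝ, 0 ≤ α → 0 ≤ β → α + β = 1 →
      g (α * u + β * v) ≤ α * g u + β * g v := by
    intro u v α β hα hβ hαβ
    have hvec : y + (α * u + β * v) • x = α • (y + u • x) + β • (y + v • x) := by
      have hβ' : β = 1 - α := by linarith
      subst hβ'
      module
    calc g (α * u + β * v) = ‖α • (y + u • x) + β • (y + v • x)‖ := by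
          rw [hgdef]; simp only; rw [hvec]
      _ ≤ ‖α • (y + u • x)‖ + ‖β • (y + v • x)‖ := norm_add_le _ _
      _ = α * g u + β * g v := by
          rw [norm_smul, norm_smul, Real.norm_of_nonneg hα, Real.norm_of_nonneg hβ]
  have hlip : ∀ s t : ℝ, |g t - g s| ≤ c * |t - s| := by
    intro s t
    have h1 : (y + t • x) - (y + s • x) = (t - s) • x := by module
    calc |g t - g s| ≤ ‖(y + t • x) - (y + s • x)‖ := abs_norm_sub_norm_le _ _
      _ = c * |t - s| := by rw [h1, norm_smul, Real.norm_eq_abs, mul_comm]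
  have keyAdd : ∀ t : ℝ, ‖(‖x‖)⁻¹ • x + (‖y + t • x‖)⁻¹ • (y + t • x)‖
      = g (t + g t / c) / g t := by
    intro t
    have hgt := (hpos t).ne'
    have hvec : (‖x‖)⁻¹ • x + (‖y + t • x‖)⁻¹ • (y + t • x)
        = (g t)⁻¹ • (y + (t + g t / c) • x) := by
      match_scalars <;> (field_simp [show ‖y + t • x‖ ≠ 0 from hgt]; all_goals (simp only [hcdef, hgdef]; try ring))
    rw [hvec, norm_smul, Real.norm_eq_abs, abs_inv, abs_of_pos (hpos t),
      inv_mul_eq_div]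
  have keySub : ∀ t : ℝ, ‖(‖x‖)⁻¹ • x - (‖y + t • x‖)⁻¹ • (y + t • x)‖
      = g (t - g t / c) / g t := by
    intro t
    have hgt := (hpos t).ne'
    have hvec : (‖x‖)⁻¹ • x - (‖y + t • x‖)⁻¹ • (y + t • x)
        = -((g t)⁻¹ • (y + (t - g t / c) • x)) := by
      match_scalars <;> (field_simp [show ‖y + t • x‖ ≠ 0 from hgt]; all_goals (simp only [hcdef, hgdef]; try ring))
    rw [hvec, norm_neg, norm_smul, Real.norm_eq_abs, abs_inv, abs_of_pos (hpos t),
      inv_mul_eq_div]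
  constructor
  · have : (fun t : ℝ => ‖(‖x‖)⁻¹ • x + (‖y + t • x‖)⁻¹ • (y + t • x)‖)
        = fun t => g (t + g t / c) / g t := funext keyAdd
    rw [this]
    exact aux_mono g c hc hpos hconv hlip
  · have : (fun t : ℝ => ‖(‖x‖)⁻¹ • x - (‖y + t • x‖)⁻¹ • (y + t • x)‖)
        = fun t => g (t - g t / c) / g t := funext keySub
    rw [this]
    exact aux_anti g c hc hpos hconv hlip
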